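/- Let g : ℝ → ℝ be five times continuously differentiable and satisfy (g·g')⁽⁴⁾(z) = 120 g'(z)z + 240 g''(z)z² + 120 g'''(z)z³ + 20 g⁽⁴⁾(z)z⁴ + g⁽⁵⁾(z)z⁵ for all z, together with g(0) = g''(0) = g⁽⁴⁾(0) = 0. Then g satisfies the first-order equation g(z)·g'(z) = z⁵·g'(z) + A·z + B·z³ for all z, where A = (g'(0))² and B = (2/3)·g'(0)·g'''(0). -/

import Mathlib

lemma integ_aux {f q f' : ℝ → ℝ} (hf : ∀ x, HasDerivAt f (f' x) x)
    (hq : ∀ x, HasDerivAt q (f' x) x) (h0 : f 0 = q 0) : ∀ x, f x = q x := by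
  intro x
  have key := is_const_of_deriv_eq_zero (f := fun y => f y - q y)
    (fun y => ((hf y).sub (hq y)).differentiableAt)
    (fun y => by have := ((hf y).sub (hq y)).deriv; simp only [sub_self] at this; exact this) x 0
  simp only [h0, sub_self] at key
  linarith

theorem fifth_order_in_time_ODE_first_integral
    (g : ℝ → ℝ) (hg : ContDiff ℝ 5 g)
    (hODE : ∀ z : ℝ,
      iteratedDeriv 4 (fun z : ℝ => g z * deriv g z) z
        = 120 * deriv g z * z + 240 * iteratedDeriv 2 g z * z ^ 2
          + 120 * iteratedDeriv 3 g z * z ^ 3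
          + 20 * iteratedDeriv 4 g z * z ^ 4 + iteratedDeriv 5 g z * z ^ 5)
    (h0 : g 0 = 0) (h2 : iteratedDeriv 2 g 0 = 0) (h4 : iteratedDeriv 4 g 0 = 0) :
    ∀ z : ℝ,
      g z * deriv g z
        = z ^ 5 * deriv g z + (deriv g 0) ^ 2 * z
          + (2/3) * deriv g 0 * iteratedDeriv 3 g 0 * z ^ 3 := by
  have Hd : ∀ k : ℕ, k < 5 → ∀ z : ℝ,
      HasDerivAt (iteratedDeriv k g) (iteratedDeriv (k+1) g z) z := by
    intro k hk z
    have h1 := (hg.differentiable_iteratedDeriv k (by exact_mod_cast hk)) z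
    have h2 := h1.hasDerivAt
    rwa [← iteratedDeriv_succ] at h2
  have Hg : ∀ z : ℝ, HasDerivAt g (iteratedDeriv 1 g z) z := by
    have := Hd 0 (by norm_num)
    simpa [iteratedDeriv_zero] using this
  have e1 : deriv g = iteratedDeriv 1 g := (iteratedDeriv_one (f := g)).symm
  -- derivative chain for F = g * g'
  have dF1 : deriv (fun z => g z * deriv g z)
      = fun z => iteratedDeriv 1 g z ^ 2 + g z * iteratedDeriv 2 g z := by
    funext z
    rw [e1]
    have h := (Hg z).mul (Hd 1 (by norm_num) z)
    erw [h.deriv]; ring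
  have dF2 : deriv (fun z => iteratedDeriv 1 g z ^ 2 + g z * iteratedDeriv 2 g z)
      = fun z => 3 * iteratedDeriv 1 g z * iteratedDeriv 2 g z + g z * iteratedDeriv 3 g z := by
    funext z
    have h := (((Hd 1 (by norm_num) z).pow 2).add ((Hg z).mul (Hd 2 (by norm_num) z)))
    erw [h.deriv]; push_cast; ring
  have dF3 : deriv (fun z => 3 * iteratedDeriv 1 g z * iteratedDeriv 2 g z + g z * iteratedDeriv 3 g z)
      = fun z => 3 * iteratedDeriv 2 g z ^ 2 + 4 * iteratedDeriv 1 g z * iteratedDeriv 3 g z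
          + g z * iteratedDeriv 4 g z := by
    funext z
    have h := ((((Hd 1 (by norm_num) z).const_mul (3:ℝ)).mul (Hd 2 (by norm_num) z)).add
      ((Hg z).mul (Hd 3 (by norm_num) z)))
    erw [h.deriv]; ring
  have dF4 : ∀ z : ℝ, deriv (fun z => 3 * iteratedDeriv 2 g z ^ 2
      + 4 * iteratedDeriv 1 g z * iteratedDeriv 3 g z + g z * iteratedDeriv 4 g z) z
      = 10 * iteratedDeriv 2 g z * iteratedDeriv 3 g z + 5 * iteratedDeriv 1 g z * iteratedDeriv 4 g z
        + g z * iteratedDeriv 5 g z := by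
    intro z
    have h := ((((Hd 2 (by norm_num) z).pow 2).const_mul (3:ℝ)).add
        (((Hd 1 (by norm_num) z).const_mul (4:ℝ)).mul (Hd 3 (by norm_num) z))).add
      ((Hg z).mul (Hd 4 (by norm_num) z))
    erw [h.deriv]; push_cast; ring
  have key : ∀ z : ℝ,
      10 * iteratedDeriv 2 g z * iteratedDeriv 3 g z + 5 * iteratedDeriv 1 g z * iteratedDeriv 4 g z
        + g z * iteratedDeriv 5 g z
      = 120 * iteratedDeriv 1 g z * z + 240 * iteratedDeriv 2 g z * z ^ 2
          + 120 * iteratedDeriv 3 g z * z ^ 3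
          + 20 * iteratedDeriv 4 g z * z ^ 4 + iteratedDeriv 5 g z * z ^ 5 := by
    intro z
    have h := hODE z
    rw [show iteratedDeriv 4 (fun z : ℝ => g z * deriv g z) z
        = deriv (deriv (deriv (deriv (fun z : ℝ => g z * deriv g z)))) z by
      simp [iteratedDeriv_succ, iteratedDeriv_zero]] at h
    rw [dF1, dF2, dF3, dF4, e1] at h
    exact h
  set c3 : ℝ := 4 * iteratedDeriv 1 g 0 * iteratedDeriv 3 g 0 with hc3
  set c1 : ℝ := (iteratedDeriv 1 g 0) ^ 2 with hc1
  -- ψ3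
  have hψ3 : ∀ z : ℝ, HasDerivAt (fun z => 3 * iteratedDeriv 2 g z ^ 2
      + 4 * iteratedDeriv 1 g z * iteratedDeriv 3 g z + g z * iteratedDeriv 4 g z
      - (60 * z^2 * iteratedDeriv 1 g z + 60 * z^3 * iteratedDeriv 2 g z
         + 15 * z^4 * iteratedDeriv 3 g z + z^5 * iteratedDeriv 4 g z)) 0 z := by
    intro z
    have hA := ((((Hd 2 (by norm_num) z).pow 2).const_mul (3:ℝ)).add
        (((Hd 1 (by norm_num) z).const_mul (4:ℝ)).mul (Hd 3 (by norm_num) z))).add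
      ((Hg z).mul (Hd 4 (by norm_num) z))
    have hB := (((((hasDerivAt_pow 2 z).const_mul (60:ℝ)).mul (Hd 1 (by norm_num) z)).add
        (((hasDerivAt_pow 3 z).const_mul (60:ℝ)).mul (Hd 2 (by norm_num) z))).add
        (((hasDerivAt_pow 4 z).const_mul (15:ℝ)).mul (Hd 3 (by norm_num) z))).add
        ((hasDerivAt_pow 5 z).mul (Hd 4 (by norm_num) z))
    have h := hA.sub hB
    refine h.congr_deriv (Eq.symm ?_)
    push_cast
    linear_combination - key z
  have hψ3c : ∀ z : ℝ, 3 * iteratedDeriv 2 g z ^ 2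
      + 4 * iteratedDeriv 1 g z * iteratedDeriv 3 g z + g z * iteratedDeriv 4 g z
      - (60 * z^2 * iteratedDeriv 1 g z + 60 * z^3 * iteratedDeriv 2 g z
         + 15 * z^4 * iteratedDeriv 3 g z + z^5 * iteratedDeriv 4 g z) = c3 :=
    integ_aux (f' := fun _ => 0) hψ3 (fun z => hasDerivAt_const z c3)
      (by simp [h0, h2, hc3])
  -- ψ2
  have hψ2 : ∀ z : ℝ, HasDerivAt (fun z => 3 * iteratedDeriv 1 g z * iteratedDeriv 2 g z
      + g z * iteratedDeriv 3 g z
      - (20 * z^3 * iteratedDeriv 1 g z + 10 * z^4 * iteratedDeriv 2 g z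
         + z^5 * iteratedDeriv 3 g z)) c3 z := by
    intro z
    have hA := ((((Hd 1 (by norm_num) z).const_mul (3:ℝ)).mul (Hd 2 (by norm_num) z)).add
      ((Hg z).mul (Hd 3 (by norm_num) z)))
    have hB := ((((hasDerivAt_pow 3 z).const_mul (20:ℝ)).mul (Hd 1 (by norm_num) z)).add
        (((hasDerivAt_pow 4 z).const_mul (10:ℝ)).mul (Hd 2 (by norm_num) z))).add
        ((hasDerivAt_pow 5 z).mul (Hd 3 (by norm_num) z))
    have h := hA.sub hB
    refine h.congr_deriv (Eq.symm ?_)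
    push_cast
    linear_combination - hψ3c z
  have hψ2c : ∀ z : ℝ, 3 * iteratedDeriv 1 g z * iteratedDeriv 2 g z
      + g z * iteratedDeriv 3 g z
      - (20 * z^3 * iteratedDeriv 1 g z + 10 * z^4 * iteratedDeriv 2 g z
         + z^5 * iteratedDeriv 3 g z) = c3 * z := by
    have hq : ∀ z : ℝ, HasDerivAt (fun z : ℝ => c3 * z) c3 z := by
      intro z
      simpa using (hasDerivAt_id z).const_mul c3
    exact integ_aux hψ2 hq (by simp [h0, h2])
  -- ψ1
  have hψ1 : ∀ z : ℝ, HasDerivAt (fun z => iteratedDeriv 1 g z ^ 2 + g z * iteratedDeriv 2 g z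
      - (5 * z^4 * iteratedDeriv 1 g z + z^5 * iteratedDeriv 2 g z)) (c3 * z) z := by
    intro z
    have hA := (((Hd 1 (by norm_num) z).pow 2).add ((Hg z).mul (Hd 2 (by norm_num) z)))
    have hB := (((hasDerivAt_pow 4 z).const_mul (5:ℝ)).mul (Hd 1 (by norm_num) z)).add
        ((hasDerivAt_pow 5 z).mul (Hd 2 (by norm_num) z))
    have h := hA.sub hB
    refine h.congr_deriv (Eq.symm ?_)
    push_cast
    linear_combination - hψ2c z
  have hψ1c : ∀ z : ℝ, iteratedDeriv 1 g z ^ 2 + g z * iteratedDeriv 2 g z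
      - (5 * z^4 * iteratedDeriv 1 g z + z^5 * iteratedDeriv 2 g z)
      = c1 + c3 / 2 * z ^ 2 := by
    have hq : ∀ z : ℝ, HasDerivAt (fun z : ℝ => c1 + c3 / 2 * z ^ 2) (c3 * z) z := by
      intro z
      have := ((hasDerivAt_pow 2 z).const_mul (c3 / 2)).const_add c1
      refine this.congr_deriv (Eq.symm ?_)
      push_cast; ring
    exact integ_aux hψ1 hq (by simp [h0, hc1])
  -- ψ
  have hψ : ∀ z : ℝ, HasDerivAt (fun z => g z * iteratedDeriv 1 g z - z^5 * iteratedDeriv 1 g z)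
      (c1 + c3 / 2 * z ^ 2) z := by
    intro z
    have h := ((Hg z).mul (Hd 1 (by norm_num) z)).sub
      ((hasDerivAt_pow 5 z).mul (Hd 1 (by norm_num) z))
    refine h.congr_deriv (Eq.symm ?_)
    push_cast
    linear_combination - hψ1c z
  have hψc : ∀ z : ℝ, g z * iteratedDeriv 1 g z - z^5 * iteratedDeriv 1 g z
      = c1 * z + c3 / 6 * z ^ 3 := by
    have hq : ∀ z : ℝ, HasDerivAt (fun z : ℝ => c1 * z + c3 / 6 * z ^ 3)
        (c1 + c3 / 2 * z ^ 2) z := by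
      intro z
      have := ((hasDerivAt_id z).const_mul c1).add ((hasDerivAt_pow 3 z).const_mul (c3 / 6))
      refine this.congr_deriv (Eq.symm ?_)
      push_cast; ring
    exact integ_aux hψ hq (by simp [h0])
  intro z
  rw [e1]
  have h := hψc z
  rw [hc1, hc3] at h
  linarith [h, sq_nonneg z]
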